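/- arXiv:2004.07409 — 7 statements merged into one kernel-verified Lean document; each statement's English description precedes it below -/
import Mathlib

section
/- The relation x ⤳ y is invariant under the group action: for any Polish G-space X, any x, y ∈ X, and any g, h ∈ G, if x ⤳ y then gx ⤳ hy. -/
def Unbal (G : Type*) {X : Type*} [Group G] [TopologicalSpace G] [TopologicalSpace X]
    [MulAction G X] (x y : X) : Prop :=
  ∀ V : Set G, IsOpen V → (1 : G) ∈ V →
    ∀ U : Set X, IsOpen U → (x ∈ U ∨ y ∈ U) →
      ∃ gx gy : G, gx • x ∈ U ∧ gy • y ∈ U ∧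
        gy • y ∈ closure ((fun v : G => v • (gx • x)) '' V) ∧
        gx • x ∈ closure ((fun v : G => v • (gy • y)) '' V)

def BF (G : Type*) {X : Type*} [Group G] [TopologicalSpace G] [TopologicalSpace X]
    [MulAction G X] (α : Ordinal) (V : Set G) (x y : X) : Prop :=
  if α = 0 then x ∈ closure ((fun v : G => v • y) '' V)
  else ∀ W : Set G, IsOpen W → (1 : G) ∈ W →
    ∃ v ∈ V, ∀ β : Ordinal, β < α → BF G β W (v • y) x
termination_by α

def IsPiClass {X : Type*} [TopologicalSpace X] (α : Ordinal) (A : Set X) : Prop :=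
  IsClosed A ∨ ∃ f : ℕ → Set X, A = ⋂ n, f n ∧ ∀ n, ∃ (β : Ordinal) (_ : β < α), IsPiClass β (f n)ᶜ
termination_by α

def VaughtStar (G : Type*) {X : Type*} [Group G] [TopologicalSpace G] [TopologicalSpace X]
    [MulAction G X] (A : Set X) (V : Set G) : Set X :=
  {x | IsMeagre {g ∈ V | g • x ∉ A}}

def VaughtDelta (G : Type*) {X : Type*} [Group G] [TopologicalSpace G] [TopologicalSpace X]
    [MulAction G X] (A : Set X) (V : Set G) : Set X :=
  {x | ¬ IsMeagre {g ∈ V | g • x ∈ A}}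

def IsTSI (H : Type*) [Group H] [tH : TopologicalSpace H] : Prop :=
  ∃ m : MetricSpace H, m.toUniformSpace.toTopologicalSpace = tH ∧
    (∀ g h h' : H, m.dist (g * h) (g * h') = m.dist h h') ∧
    (∀ g h h' : H, m.dist (h * g) (h' * g) = m.dist h h')

def IsCLI (H : Type*) [Group H] [tH : TopologicalSpace H] : Prop :=
  ∃ m : MetricSpace H, m.toUniformSpace.toTopologicalSpace = tH ∧
    (∀ g h h' : H, m.dist (g * h) (g * h') = m.dist h h') ∧
    @CompleteSpace H m.toUniformSpace

def BaireMeas {X Y : Type*} [TopologicalSpace X] [TopologicalSpace Y] (f : X → Y) : Prop :=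
  ∀ U : Set Y, IsOpen U → ∃ V : Set X, IsOpen V ∧ IsMeagre (symmDiff (f ⁻¹' U) V)

lemma unbal_aux {G : Type*} {X : Type*} [Group G] [TopologicalSpace G] [IsTopologicalGroup G]
    [TopologicalSpace X] [MulAction G X] [ContinuousSMul G X]
    (k : G) (p q : X) (W V : Set G) (hsub : ∀ w ∈ W, k * w * k⁻¹ ∈ V)
    (hq : q ∈ closure ((fun v : G => v • p) '' W)) :
    k • q ∈ closure ((fun v : G => v • (k • p)) '' V) := by
  have h1 : k • q ∈ (Homeomorph.smul k (α := X)) '' closure ((fun v : G => v • p) '' W) :=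
    ⟨q, hq, rfl⟩
  rw [(Homeomorph.smul k (α := X)).image_closure] at h1
  refine closure_mono ?_ h1
  rintro _ ⟨_, ⟨w, hw, rfl⟩, rfl⟩
  exact ⟨k * w * k⁻¹, hsub w hw, by simp [mul_smul]⟩

theorem stmt0 {G : Type*} {X : Type*} [Group G] [TopologicalSpace G] [IsTopologicalGroup G]
    [PolishSpace G] [TopologicalSpace X] [PolishSpace X] [MulAction G X] [ContinuousSMul G X]
    (x y : X) (g h : G) (hxy : Unbal G x y) :
    Unbal G (g • x) (h • y) := by
  classical
  intro V hV hV1 U hU hU1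
  set k : G := if g • x ∈ U then g else h with hk
  have hconj : Continuous fun w : G => k * w * k⁻¹ := by continuity
  set W : Set G := (fun w : G => k * w * k⁻¹) ⁻¹' V with hWdef
  have hWopen : IsOpen W := hV.preimage hconj
  have hW1 : (1 : G) ∈ W := by simp [hWdef, hV1]
  set U' : Set X := (fun z : X => k • z) ⁻¹' U with hU'def
  have hU'open : IsOpen U' := hU.preimage (continuous_const_smul k)
  have hmem : x ∈ U' ∨ y ∈ U' := by
    by_cases hgx : g • x ∈ U
    · left; simp [hU'def, hk, if_pos hgx, hgx]
    · right
      rcases hU1 with h1 | h1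
      · exact absurd h1 hgx
      · simp [hU'def, hk, if_neg hgx, h1]
  obtain ⟨gx, gy, hgxU, hgyU, hc1, hc2⟩ := hxy W hWopen hW1 U' hU'open hmem
  have hsub : ∀ w ∈ W, k * w * k⁻¹ ∈ V := fun w hw => hw
  have e1 : (k * gx * g⁻¹) • (g • x) = k • (gx • x) := by simp [mul_smul]
  have e2 : (k * gy * h⁻¹) • (h • y) = k • (gy • y) := by simp [mul_smul]
  refine ⟨k * gx * g⁻¹, k * gy * h⁻¹, ?_, ?_, ?_, ?_⟩
  · rw [e1]; exact hgxU
  · rw [e2]; exact hgyU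
  · rw [e1, e2]; exact unbal_aux k (gx • x) (gy • y) W V hsub hc1
  · rw [e1, e2]; exact unbal_aux k (gy • y) (gx • x) W V hsub hc2
end

section
/- If x ⤳ y, then for every open neighborhood V of the identity of G and every nonempty open set U ⊆ X containing x or y, the set of g^x ∈ G such that there exists g^y ∈ G with g^x·x, g^y·y ∈ U, g^y·y ∈ closure(V·(g^x·x)), and g^x·x ∈ closure(V·(g^y·y)), is nonmeager in G. -/
open Pointwise


theorem stmt2 {G : Type*} {X : Type*} [Group G] [TopologicalSpace G] [IsTopologicalGroup G]
    [PolishSpace G] [TopologicalSpace X] [PolishSpace X] [MulAction G X] [ContinuousSMul G X]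
    (x y : X) (hxy : Unbal G x y)
    (V : Set G) (hV : IsOpen V) (h1V : (1 : G) ∈ V)
    (U : Set X) (hU : IsOpen U) (hUne : U.Nonempty) (hmem : x ∈ U ∨ y ∈ U) :
    ¬ IsMeagre {gx : G | ∃ gy : G, gx • x ∈ U ∧ gy • y ∈ U ∧
        gy • y ∈ closure ((fun v : G => v • (gx • x)) '' V) ∧
        gx • x ∈ closure ((fun v : G => v • (gy • y)) '' V)} := by
  intro hmeag
  -- Get N open nbhd of 1 with N * N ⊆ V
  obtain ⟨N, hNopen, h1N, hNN⟩ := exists_open_nhds_one_mul_subset (hV.mem_nhds h1V)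
  -- Apply Unbal with N
  obtain ⟨gx, gy, hgxU, hgyU, hcl1, hcl2⟩ := hxy N hNopen h1N U hU hmem
  -- The open set of translates
  set O : Set G := (N ∩ N⁻¹ ∩ {w : G | w • (gx • x) ∈ U}) with hO
  have hOopen : IsOpen O := ((hNopen.inter hNopen.inv).inter
    (hU.preimage (continuous_id.smul continuous_const)))
  have h1O : (1 : G) ∈ O := ⟨⟨h1N, by simpa using h1N⟩, by simpa using hgxU⟩
  -- Every w * gx with w ∈ O is in the set
  have hsub : (fun w : G => w * gx) '' O ⊆ {gx : G | ∃ gy : G, gx • x ∈ U ∧ gy • y ∈ U ∧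
        gy • y ∈ closure ((fun v : G => v • (gx • x)) '' V) ∧
        gx • x ∈ closure ((fun v : G => v • (gy • y)) '' V)} := by
    rintro _ ⟨w, ⟨⟨hwN, hwNi⟩, hwU⟩, rfl⟩
    refine ⟨gy, by simpa [mul_smul] using hwU, hgyU, ?_, ?_⟩
    · refine closure_mono ?_ hcl1
      rintro _ ⟨v, hvN, rfl⟩
      exact ⟨v * w⁻¹, hNN (Set.mul_mem_mul hvN hwNi), by simp [mul_smul]⟩
    · have : (w * gx) • x ∈ w • closure ((fun v : G => v • (gy • y)) '' N) := by
        rw [mul_smul]; exact Set.smul_mem_smul_set hcl2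
      rw [← closure_smul] at this
      refine closure_mono ?_ this
      rintro _ ⟨_, ⟨v, hvN, rfl⟩, rfl⟩
      exact ⟨w * v, hNN (Set.mul_mem_mul hwN hvN), by simp [mul_smul]⟩
  have hOmeag : IsMeagre ((fun w : G => w * gx) '' O) := hmeag.mono hsub
  -- but it's nonempty open
  have hOopen' : IsOpen ((fun w : G => w * gx) '' O) :=
    (Homeomorph.mulRight gx).isOpenMap O hOopen
  have hOne : ((fun w : G => w * gx) '' O).Nonempty := ⟨gx, 1, h1O, one_mul gx⟩
  -- Baire
  letI := TopologicalSpace.upgradeIsCompletelyMetrizable G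
  have hdense : Dense ((fun w : G => w * gx) '' O)ᶜ := dense_of_mem_residual hOmeag
  obtain ⟨z, hz1, hz2⟩ := hdense.inter_open_nonempty _ hOopen' hOne
  exact hz2 hz1
end

section
/- For any Polish G-space X, any x, y, z ∈ X, open identity neighborhoods V, W ⊆ G, and ordinal α: if x ≾^α_V y and y ≾^α_W z, then x ≾^α_{VW} z. -/
open scoped Pointwise

lemma bf_mono {G X : Type*} [Group G] [TopologicalSpace G] [TopologicalSpace X]
    [MulAction G X] (α : Ordinal) {S S' : Set G} (hSS : S ⊆ S') {x y : X}
    (h : BF G α S x y) : BF G α S' x y := by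
  rw [BF] at h ⊢
  by_cases h0 : α = 0
  · rw [if_pos h0] at h ⊢
    exact closure_mono (Set.image_mono hSS) h
  · rw [if_neg h0] at h ⊢
    intro U hU h1U
    obtain ⟨v, hv, hβ⟩ := h U hU h1U
    exact ⟨v, hSS hv, hβ⟩

lemma bf_conj {G X : Type*} [Group G] [TopologicalSpace G] [IsTopologicalGroup G]
    [TopologicalSpace X] [MulAction G X] [ContinuousSMul G X]
    (α : Ordinal) : ∀ (g : G) (S : Set G) (a b : X),
    BF G α S a b → BF G α ((fun s => g * s * g⁻¹) '' S) (g • a) (g • b) := by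
  induction α using Ordinal.induction with
  | _ α IH =>
    intro g S a b h
    rw [BF] at h ⊢
    by_cases h0 : α = 0
    · rw [if_pos h0] at h ⊢
      have heq : (fun v : G => v • (g • b)) '' ((fun s => g * s * g⁻¹) '' S)
          = g • ((fun v : G => v • b) '' S) := by
        rw [Set.image_image, ← Set.image_smul, Set.image_image]
        apply Set.image_congr'
        intro s
        rw [smul_smul, smul_smul, show g * s * g⁻¹ * g = g * s by group]
      rw [heq, closure_smul]
      exact Set.smul_mem_smul_set h
    · rw [if_neg h0] at h ⊢
      intro U hU h1U
      have hUeq : (fun s : G => g⁻¹ * s * g) '' U = (fun s : G => g * s * g⁻¹) ⁻¹' U := by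
        ext s
        simp only [Set.mem_image, Set.mem_preimage]
        constructor
        · rintro ⟨u, hu, rfl⟩
          have : g * (g⁻¹ * u * g) * g⁻¹ = u := by group
          rwa [this]
        · intro hs
          exact ⟨g * s * g⁻¹, hs, by group⟩
      have hU' : IsOpen ((fun s : G => g⁻¹ * s * g) '' U) := by
        rw [hUeq]; exact hU.preimage (by continuity)
      have h1U' : (1 : G) ∈ (fun s : G => g⁻¹ * s * g) '' U :=
        ⟨1, h1U, by group⟩
      obtain ⟨v, hv, hβ⟩ := h _ hU' h1U'
      refine ⟨g * v * g⁻¹, Set.mem_image_of_mem _ hv, fun β hβα => ?_⟩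
      have := IH β hβα g _ _ _ (hβ β hβα)
      have hset : (fun s : G => g * s * g⁻¹) '' ((fun s : G => g⁻¹ * s * g) '' U) = U := by
        rw [Set.image_image]
        have : (fun s : G => g * (g⁻¹ * s * g) * g⁻¹) = fun s => s := by
          funext s; group
        rw [this, Set.image_id']
      rw [hset] at this
      have hpt : g • v • b = (g * v * g⁻¹) • g • b := by
        rw [smul_smul, smul_smul]; group
      rwa [hpt] at this

lemma bf_trans {G X : Type*} [Group G] [TopologicalSpace G] [IsTopologicalGroup G]
    [TopologicalSpace X] [MulAction G X] [ContinuousSMul G X]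
    (α : Ordinal) : ∀ (x y z : X) (V W : Set G), IsOpen V → (1 : G) ∈ V →
    IsOpen W → (1 : G) ∈ W → BF G α V x y → BF G α W y z → BF G α (V * W) x z := by
  induction α using Ordinal.induction with
  | _ α IH =>
    intro x y z V W hV h1V hW h1W h1 h2
    rw [BF] at h1 h2 ⊢
    by_cases h0 : α = 0
    · rw [if_pos h0] at h1 h2 ⊢
      have hsub : (fun v : G => v • y) '' V ⊆ closure ((fun w : G => w • z) '' (V * W)) := by
        rintro p ⟨v, hv, rfl⟩
        have : v • y ∈ v • closure ((fun w : G => w • z) '' W) := Set.smul_mem_smul_set h2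
        rw [← closure_smul] at this
        refine closure_mono ?_ this
        rintro q ⟨q', ⟨w, hw, rfl⟩, rfl⟩
        exact ⟨v * w, Set.mul_mem_mul hv hw, mul_smul v w z⟩
      exact closure_minimal hsub isClosed_closure h1
    · rw [if_neg h0] at h1 h2 ⊢
      intro U hU h1U
      obtain ⟨U₁, hU₁, h1U₁, hUU⟩ := exists_open_nhds_one_mul_subset (hU.mem_nhds h1U)
      obtain ⟨v, hv, hβ1⟩ := h1 U₁ hU₁ h1U₁
      have hU₂ : IsOpen ((fun s : G => v⁻¹ * s * v) '' U₁) := by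
        have : (fun s : G => v⁻¹ * s * v) '' U₁ = (fun s : G => v * s * v⁻¹) ⁻¹' U₁ := by
          ext s
          simp only [Set.mem_image, Set.mem_preimage]
          constructor
          · rintro ⟨u, hu, rfl⟩
            have : v * (v⁻¹ * u * v) * v⁻¹ = u := by group
            rwa [this]
          · intro hs
            exact ⟨v * s * v⁻¹, hs, by group⟩
        rw [this]
        exact hU₁.preimage (by continuity)
      have h1U₂ : (1 : G) ∈ (fun s : G => v⁻¹ * s * v) '' U₁ := ⟨1, h1U₁, by group⟩
      obtain ⟨w, hw, hβ2⟩ := h2 _ hU₂ h1U₂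
      refine ⟨v * w, Set.mul_mem_mul hv hw, fun β hβα => ?_⟩
      have hc := bf_conj β v _ _ _ (hβ2 β hβα)
      have hset : (fun s : G => v * s * v⁻¹) '' ((fun s : G => v⁻¹ * s * v) '' U₁) = U₁ := by
        rw [Set.image_image]
        have : (fun s : G => v * (v⁻¹ * s * v) * v⁻¹) = fun s => s := by funext s; group
        rw [this, Set.image_id']
      rw [hset] at hc
      have hpt : v • w • z = (v * w) • z := by rw [mul_smul]
      rw [hpt] at hc
      -- hc : BF G β U₁ ((v*w) • z) (v • y), hβ1 : BF G β U₁ (v • y) x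
      have := IH β hβα ((v * w) • z) (v • y) x U₁ U₁ hU₁ h1U₁ hU₁ h1U₁ hc (hβ1 β hβα)
      exact bf_mono β hUU this

theorem stmt4 {G : Type*} {X : Type*} [Group G] [TopologicalSpace G] [IsTopologicalGroup G]
    [PolishSpace G] [TopologicalSpace X] [PolishSpace X] [MulAction G X] [ContinuousSMul G X]
    (x y z : X) (V W : Set G) (hV : IsOpen V) (h1V : (1 : G) ∈ V)
    (hW : IsOpen W) (h1W : (1 : G) ∈ W) (α : Ordinal)
    (h1 : BF G α V x y) (h2 : BF G α W y z) :
    BF G α (V * W) x z :=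
  bf_trans α x y z V W hV h1V hW h1W h1 h2
end

section
/- Let G be a Polish group, X a Polish G-space, and V, W open identity neighborhoods with W² ⊆ V. If A ⊆ X is closed, x ≾^0_W y (i.e., x ∈ closure(W·y) in the symmetric-free base case of the back-and-forth relation), and y ∈ A^{*V}, then x ∈ A^{*W}. -/
open scoped Pointwise

theorem stmt6 {G : Type*} {X : Type*} [Group G] [TopologicalSpace G] [IsTopologicalGroup G]
    [PolishSpace G] [TopologicalSpace X] [PolishSpace X] [MulAction G X] [ContinuousSMul G X]
    (x y : X) (V W : Set G) (hV : IsOpen V) (h1V : (1 : G) ∈ V)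
    (hW : IsOpen W) (h1W : (1 : G) ∈ W) (hWV : W * W ⊆ V)
    (A : Set X) (hA : IsClosed A)
    (h0 : BF G 0 W x y) (hyA : y ∈ VaughtStar G A V) :
    x ∈ VaughtStar G A W := by
  -- The set {g ∈ W | g • x ∉ A} is open; if nonempty it is nonmeager, leading to contradiction.
  have h0' : x ∈ closure ((fun v : G => v • y) '' W) := by
    rw [BF] at h0; simpa using h0
  have hCopen : IsOpen {g : G | g ∈ W ∧ g • x ∉ A} := by
    have : IsOpen {g : G | g • x ∉ A} :=
      hA.isOpen_compl.preimage (continuous_id.smul continuous_const)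
    exact hW.inter this
  by_contra hC
  -- C is nonempty
  have hCne : {g : G | g ∈ W ∧ g • x ∉ A}.Nonempty := by
    rcases Set.eq_empty_or_nonempty {g : G | g ∈ W ∧ g • x ∉ A} with h | h
    · exact absurd (show IsMeagre {g : G | g ∈ W ∧ g • x ∉ A} from h ▸ IsMeagre.empty) hC
    · exact h
  obtain ⟨g₀, hg₀W, hg₀A⟩ := hCne
  -- continuity of the action at (g₀, x)
  have hφ : IsOpen ((fun p : G × X => p.1 • p.2) ⁻¹' Aᶜ) :=
    hA.isOpen_compl.preimage continuous_smul
  have hmem : (g₀, x) ∈ (fun p : G × X => p.1 • p.2) ⁻¹' Aᶜ := hg₀A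
  obtain ⟨u, v, hu, hv, hg₀u, hxv, huv⟩ := isOpen_prod_iff.mp hφ g₀ x hmem
  -- find w ∈ W with w • y ∈ v
  have hx' := mem_closure_iff.mp h0' v hv hxv
  obtain ⟨z, hzv, w, hwW, hwz⟩ := hx'
  -- the set D = (u ∩ W) * {w} is open, nonempty, and contained in the meager set
  set D : Set G := (fun g => g * w) '' (u ∩ W) with hD
  have hDopen : IsOpen D := (Homeomorph.mulRight w).isOpenMap _ (hu.inter hW)
  have hDne : D.Nonempty := ⟨g₀ * w, ⟨g₀, ⟨hg₀u, hg₀W⟩, rfl⟩⟩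
  have hDsub : D ⊆ {g : G | g ∈ V ∧ g • y ∉ A} := by
    rintro _ ⟨g, ⟨hgu, hgW⟩, rfl⟩
    refine ⟨hWV (Set.mul_mem_mul hgW hwW), ?_⟩
    have : (g, w • y) ∈ u ×ˢ v := ⟨hgu, by rw [show w • y = z from hwz]; exact hzv⟩
    have := huv this
    simpa [mul_smul] using this
  have hDmeagre : IsMeagre D := hyA.mono hDsub
  -- an open nonempty set is not meager in a Baire space
  letI := TopologicalSpace.upgradeIsCompletelyMetrizable G
  have hdense : Dense Dᶜ := dense_of_mem_residual hDmeagre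
  obtain ⟨p, hp⟩ := hDne
  obtain ⟨q, hq, hq'⟩ := hdense.exists_mem_open hDopen ⟨p, hp⟩
  exact hq hq'
end

section
/- Let H be a TSI Polish group and Y a Polish H-space. If x ⤳ y (the unbalanced relation holds), then x ≾^1_H y. -/
theorem stmt10 {H : Type*} {Y : Type*} [Group H] [TopologicalSpace H] [IsTopologicalGroup H]
    [PolishSpace H] [TopologicalSpace Y] [PolishSpace Y] [MulAction H Y] [ContinuousSMul H Y]
    (hTSI : IsTSI H) (x y : Y) (hxy : Unbal H x y) :
    BF H 1 Set.univ x y := by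
  rw [BF]
  simp only [one_ne_zero, if_false]
  intro W hWopen hW1
  obtain ⟨m, htop, hl, hr⟩ := hTSI
  -- find a conjugation-invariant basic neighborhood V ⊆ W
  have hW' : @IsOpen H m.toUniformSpace.toTopologicalSpace W := by
    rw [htop]; exact hWopen
  obtain ⟨ε, hε, hball⟩ :=
    (@Metric.isOpen_iff H m.toPseudoMetricSpace W).mp hW' 1 hW1
  set V : Set H := @Metric.ball H m.toPseudoMetricSpace 1 ε with hV
  have hVW : V ⊆ W := hball
  have hVopen : IsOpen V := by
    rw [← htop]; exact @Metric.isOpen_ball H m.toPseudoMetricSpace 1 ε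
  have hV1 : (1 : H) ∈ V := @Metric.mem_ball_self H m.toPseudoMetricSpace 1 ε hε
  have hconj : ∀ g v : H, v ∈ V → g⁻¹ * v * g ∈ V := by
    intro g v hv
    have h1 : m.dist (g⁻¹ * v * g) 1 = m.dist v 1 := by
      have e1 : m.dist (g⁻¹ * (v * g)) (g⁻¹ * g) = m.dist (v * g) g := hl g⁻¹ (v * g) g
      have e2 : m.dist (v * g) (1 * g) = m.dist v 1 := hr g v 1
      simpa [mul_assoc] using e1.trans (by simpa using e2)
    simpa [V, Metric.mem_ball, h1] using (show m.dist v 1 < ε from by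
      exact hv)
  obtain ⟨gx, gy, -, -, h3, -⟩ := hxy V hVopen hV1 Set.univ isOpen_univ (Or.inl trivial)
  refine ⟨gx⁻¹ * gy, trivial, ?_⟩
  intro β hβ
  have hβ0 : β = 0 := Ordinal.lt_one_iff_zero.mp hβ
  subst hβ0
  rw [BF]
  simp only [if_true, eq_self_iff_true]
  -- goal: (gx⁻¹ * gy) • y ∈ closure ((fun w => w • x) '' W)
  have key : (gx⁻¹ * gy) • y ∈ closure ((fun v : H => (gx⁻¹ * v * gx)) '' V |>.image (fun w => w • x)) := by
    have hcont : Continuous (fun z : Y => gx⁻¹ • z) := continuous_const_smul _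
    have := image_closure_subset_closure_image (s := (fun v : H => v • (gx • x)) '' V) hcont
    have hmem : gx⁻¹ • (gy • y) ∈ closure ((fun z : Y => gx⁻¹ • z) '' ((fun v : H => v • (gx • x)) '' V)) :=
      this ⟨gy • y, h3, rfl⟩
    have himg : (fun z : Y => gx⁻¹ • z) '' ((fun v : H => v • (gx • x)) '' V)
        = ((fun v : H => (gx⁻¹ * v * gx)) '' V |>.image (fun w => w • x)) := by
      rw [Set.image_image, Set.image_image]
      apply Set.image_congr
      intro v _
      simp [mul_smul]
    rw [himg] at hmem
    simpa [mul_smul] using hmem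
  refine closure_mono ?_ key
  rintro _ ⟨_, ⟨v, hv, rfl⟩, rfl⟩
  exact ⟨gx⁻¹ * v * gx, hVW (hconj gx v hv), rfl⟩
end

section
/- Let P ≤ S(N) be a closed permutation group on a countable set N in which all orbits are infinite. Then for a comeager set of bijections e : N → N × {0,1} (in the Polish space of such bijections with the pointwise convergence topology), for each i ∈ {0,1} and each finite A ⊆ N, there exists p ∈ P such that e(p·n) = (p·n, i) for all n ∈ A. -/
open Pointwise


def PermTop (N : Type*) : TopologicalSpace (Equiv.Perm N) :=
  TopologicalSpace.induced (fun σ : Equiv.Perm N => (σ : N → N))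
    (@Pi.topologicalSpace N (fun _ => N) (fun _ => ⊥))

/-- Extend/modify a bijection on finitely many points. -/
lemma aux_ext {N : Type*} (i : Bool) (B : Finset N) :
    ∀ (C : Set N) (e : N ≃ N × Bool),
      (∀ b ∈ B, b ∉ C) → (∀ b ∈ B, ∀ n ∈ C, (e n).1 ≠ b) →
      ∃ e' : N ≃ N × Bool, (∀ n ∈ C, e' n = e n) ∧ ∀ b ∈ B, e' b = (b, i) := by
  classical
  induction B using Finset.induction with
  | empty =>
      exact fun C e _ _ => ⟨e, fun n _ => rfl, fun b hb => absurd hb (Finset.notMem_empty b)⟩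
  | @insert b B hbB ih =>
      intro C e hdisj hfst
      set e₁ : N ≃ N × Bool := e.trans (Equiv.swap (e b) (b, i)) with he₁
      have hbC : b ∉ C := hdisj b (Finset.mem_insert_self b B)
      have he₁C : ∀ n ∈ C, e₁ n = e n := by
        intro n hn
        show Equiv.swap (e b) (b, i) (e n) = e n
        apply Equiv.swap_apply_of_ne_of_ne
        · intro h
          exact hbC (e.injective h ▸ hn)
        · intro h
          exact hfst b (Finset.mem_insert_self b B) n hn (by rw [h])
      have he₁b : e₁ b = (b, i) := by
        show Equiv.swap (e b) (b, i) (e b) = (b, i)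
        exact Equiv.swap_apply_left _ _
      obtain ⟨e', h1, h2⟩ := ih (insert b C) e₁
        (by
          intro b' hb' hmem
          rcases Set.mem_insert_iff.mp hmem with rfl | h
          · exact hbB hb'
          · exact hdisj b' (Finset.mem_insert_of_mem hb') h)
        (by
          intro b' hb' n hn
          rcases Set.mem_insert_iff.mp hn with rfl | h
          · have hfb : (e₁ n).1 = n := by rw [he₁b]
            rw [hfb]
            intro hh
            subst hh
            exact hbB hb'
          · rw [he₁C n h]
            exact hfst b' (Finset.mem_insert_of_mem hb') n h)
      refine ⟨e', fun n hn => (h1 n (Set.mem_insert_of_mem b hn)).trans (he₁C n hn), ?_⟩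
      intro b'' hb''
      rcases Finset.mem_insert.mp hb'' with rfl | h
      · exact (h1 b'' (Set.mem_insert b'' C)).trans he₁b
      · exact h2 b'' h

/-- Neumann's separation lemma: if all orbits are infinite, finite sets can be separated. -/
lemma aux_neumann {G X : Type*} [Group G] [MulAction G X]
    (horb : ∀ x : X, (MulAction.orbit G x).Infinite)
    {A B : Set X} (hA : A.Finite) (hB : B.Finite) :
    ∃ g : G, ∀ a ∈ A, g • a ∉ B := by
  classical
  by_contra h
  push_neg at h
  set s : Finset (X × X) := hA.toFinset ×ˢ hB.toFinset with hs
  set gf : X × X → G := fun k =>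
    if hk : ∃ g : G, g • k.1 = k.2 then hk.choose else 1 with hgf
  have hcovers : ⋃ k ∈ s, gf k • ((MulAction.stabilizer G k.1 : Subgroup G) : Set G)
      = Set.univ := by
    apply Set.eq_univ_of_forall
    intro g
    obtain ⟨a, haA, haB⟩ := h g
    have hex : ∃ g' : G, g' • a = (g • a : X) := ⟨g, rfl⟩
    have hk : ((a, g • a) : X × X) ∈ s := by
      simp only [hs, Finset.mem_product, Set.Finite.mem_toFinset]
      exact ⟨haA, haB⟩
    refine Set.mem_biUnion hk ?_
    rw [mem_leftCoset_iff]
    have hgk : gf (a, g • a) • a = g • a := by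
      rw [hgf]; simp only [dif_pos hex]; exact hex.choose_spec
    rw [SetLike.mem_coe, MulAction.mem_stabilizer_iff, mul_smul, inv_smul_eq_iff, hgk]
  obtain ⟨k, _, hfi⟩ := Subgroup.exists_finiteIndex_of_leftCoset_cover hcovers
  haveI := hfi
  haveI : Finite (↥(MulAction.orbit G k.1)) :=
    Finite.of_equiv _ (MulAction.orbitEquivQuotientStabilizer G k.1).symm
  exact (horb k.1) (Set.toFinite _)

theorem stmt14 {N : Type*} [Countable N]
    (P : Subgroup (Equiv.Perm N))
    (hPcl : @IsClosed _ (PermTop N) (P : Set (Equiv.Perm N)))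
    (horb : ∀ n : N, {m : N | ∃ p ∈ P, p n = m}.Infinite) :
    {e : N ≃ N × Bool | ∀ (i : Bool) (A : Set N), A.Finite →
        ∃ p ∈ P, ∀ n ∈ A, e (p n) = (p n, i)} ∈
      @residual (N ≃ N × Bool)
        (TopologicalSpace.induced (fun e : N ≃ N × Bool => (⇑e : N → N × Bool))
          (@Pi.topologicalSpace N (fun _ => N × Bool) (fun _ => ⊥))) := by
  classical
  letI : TopologicalSpace (N × Bool) := ⊥
  haveI : DiscreteTopology (N × Bool) := ⟨rfl⟩
  letI tX : TopologicalSpace (N ≃ N × Bool) :=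
    TopologicalSpace.induced (fun e : N ≃ N × Bool => (⇑e : N → N × Bool)) Pi.topologicalSpace
  -- orbits of the subgroup acting on N are infinite
  have horb' : ∀ n : N, (MulAction.orbit (↥P) n).Infinite := by
    intro n
    have : {m : N | ∃ p ∈ P, p n = m} ⊆ MulAction.orbit (↥P) n := by
      rintro m ⟨p, hp, rfl⟩
      exact ⟨⟨p, hp⟩, rfl⟩
    exact Set.Infinite.mono this (horb n)
  set coeF : (N ≃ N × Bool) → (N → N × Bool) := fun e => (⇑e : N → N × Bool) with hcoeF
  -- the pieces
  set S : Bool × Finset N → Set (N ≃ N × Bool) := fun q =>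
    coeF ⁻¹' {f : N → N × Bool | ∃ p ∈ P, ∀ n ∈ q.2, f (p n) = (p n, q.1)} with hS
  have hsub : ⋂ q, S q ⊆ {e : N ≃ N × Bool | ∀ (i : Bool) (A : Set N), A.Finite →
      ∃ p ∈ P, ∀ n ∈ A, e (p n) = (p n, i)} := by
    intro e he i A hA
    obtain ⟨p, hp, hpe⟩ := Set.mem_iInter.mp he (i, hA.toFinset)
    exact ⟨p, hp, fun n hn => hpe n (hA.mem_toFinset.mpr hn)⟩
  refine Filter.mem_of_superset ((countable_iInter_mem).mpr ?_) hsub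
  rintro ⟨i, F⟩
  apply residual_of_dense_open
  · -- openness
    apply IsOpen.preimage continuous_induced_dom
    have : {f : N → N × Bool | ∃ p ∈ P, ∀ n ∈ F, f (p n) = (p n, i)}
        = ⋃ p ∈ (P : Set (Equiv.Perm N)), ⋂ n ∈ F, {f : N → N × Bool | f (p n) = (p n, i)} := by
      ext f
      simp only [Set.mem_setOf_eq, Set.mem_iUnion, Set.mem_iInter, SetLike.mem_coe]
      tauto
    rw [this]
    apply isOpen_biUnion
    intro p _
    apply isOpen_biInter_finset
    intro n _
    have : {f : N → N × Bool | f (p n) = (p n, i)}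
        = (fun f : N → N × Bool => f (p n)) ⁻¹' {((p n, i) : N × Bool)} := rfl
    rw [this]
    exact (continuous_apply (A := fun _ : N => N × Bool) (p n)).isOpen_preimage _ (isOpen_discrete _)
  · -- density
    rw [dense_iff_inter_open]
    rintro U hU ⟨e, heU⟩
    obtain ⟨V, hV, rfl⟩ := isOpen_induced_iff.mp hU
    obtain ⟨I, u, h1, h2⟩ := isOpen_pi_iff.mp hV (coeF e) heU
    -- separate p • F from I and the first coordinates of e on I
    obtain ⟨g, hg⟩ := aux_neumann horb' (A := (F : Set N))
      (B := (I : Set N) ∪ (fun n => (e n).1) '' (I : Set N))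
      (F.finite_toSet) ((I.finite_toSet).union (I.finite_toSet.image _))
    set p : Equiv.Perm N := (g : Equiv.Perm N) with hp
    have hgp : ∀ a : N, g • a = p a := fun a => rfl
    set B' : Finset N := F.image (fun a => p a) with hB'
    obtain ⟨e', he'1, he'2⟩ := aux_ext i B' (I : Set N) e
      (by
        rintro b hb hbI
        obtain ⟨a, haF, rfl⟩ := Finset.mem_image.mp hb
        exact hg a haF (Or.inl hbI))
      (by
        rintro b hb n hn hne
        obtain ⟨a, haF, rfl⟩ := Finset.mem_image.mp hb
        exact hg a haF (Or.inr ⟨n, hn, hne⟩))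
    refine ⟨e', ?_, ?_⟩
    · show coeF e' ∈ V
      apply h2
      intro n hn
      rw [hcoeF]
      simp only
      rw [he'1 n hn]
      exact (h1 n hn).2
    · refine ⟨p, g.2, fun n hn => ?_⟩
      exact he'2 (p n) (Finset.mem_image.mpr ⟨n, hn, rfl⟩)
end

section
/- The Wreath product of two CLI Polish groups is CLI: if P is a closed subgroup of S(N) for a countable set N and G is a CLI Polish group, and P is CLI, then the semidirect product P ⋉_φ G^N (where P acts on G^N by permuting coordinates) is a CLI Polish group. -/
def permShift (N : Type*) (G : Type*) [Group G] : Equiv.Perm N →* MulAut (N → G) where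
  toFun p :=
    { toFun := fun g => fun n => g (p⁻¹ n),
      invFun := fun g => fun n => g (p n),
      left_inv := fun g => by funext n; simp,
      right_inv := fun g => by funext n; simp,
      map_mul' := fun g h => rfl }
  map_one' := by
    apply MulEquiv.toEquiv_injective; apply Equiv.ext; intro g; funext n; simp
  map_mul' p q := by
    apply MulEquiv.toEquiv_injective; apply Equiv.ext; intro g; funext n
    simp [Equiv.Perm.mul_apply]

lemma min1_tri {a b c : ℝ} (h : a ≤ b + c) (hb : 0 ≤ b) (hc : 0 ≤ c) :
    min 1 a ≤ min 1 b + min 1 c := by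
  rcases le_total 1 b with h1 | h1
  · calc min 1 a ≤ 1 := min_le_left _ _
      _ = min 1 b := (min_eq_left h1).symm
      _ ≤ min 1 b + min 1 c := le_add_of_nonneg_right (le_min zero_le_one hc)
  rcases le_total 1 c with h2 | h2
  · calc min 1 a ≤ 1 := min_le_left _ _
      _ = min 1 c := (min_eq_left h2).symm
      _ ≤ min 1 b + min 1 c := le_add_of_nonneg_left (le_min zero_le_one hb)
  · calc min 1 a ≤ a := min_le_right _ _
      _ ≤ b + c := h
      _ = min 1 b + min 1 c := by rw [min_eq_right h1, min_eq_right h2]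

abbrev Wr (N : Type*) (G : Type*) [Group G] (P : Subgroup (Equiv.Perm N)) :=
  SemidirectProduct (N → G) P ((permShift N G).comp P.subtype)

section Aux

open scoped Classical

variable {N : Type*} {G : Type*} [Group G] [MetricSpace G] {P : Subgroup (Equiv.Perm N)}



noncomputable def wTerm (x y : Wr N G P) (n : N) : ℝ :=
  if (x.right : Equiv.Perm N) n = (y.right : Equiv.Perm N) n
    then min 1 (dist (x.left ((x.right : Equiv.Perm N) n)) (y.left ((y.right : Equiv.Perm N) n)))
    else 1

lemma wTerm_nonneg (x y : Wr N G P) (n : N) : 0 ≤ wTerm x y n := by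
  unfold wTerm; split
  · exact le_min zero_le_one dist_nonneg
  · exact zero_le_one

lemma wTerm_le_one (x y : Wr N G P) (n : N) : wTerm x y n ≤ 1 := by
  unfold wTerm; split
  · exact min_le_left _ _
  · exact le_rfl

lemma wTerm_self (x : Wr N G P) (n : N) : wTerm x x n = 0 := by
  simp [wTerm]

lemma wTerm_comm (x y : Wr N G P) (n : N) : wTerm x y n = wTerm y x n := by
  unfold wTerm
  by_cases h : (x.right : Equiv.Perm N) n = (y.right : Equiv.Perm N) n
  · rw [if_pos h, if_pos h.symm, dist_comm]
  · rw [if_neg h, if_neg (Ne.symm h)]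

lemma wTerm_triangle (x y z : Wr N G P) (n : N) : wTerm x z n ≤ wTerm x y n + wTerm y z n := by
  by_cases hxy : (x.right : Equiv.Perm N) n = (y.right : Equiv.Perm N) n
  · by_cases hyz : (y.right : Equiv.Perm N) n = (z.right : Equiv.Perm N) n
    · unfold wTerm
      rw [if_pos hxy, if_pos hyz, if_pos (hxy.trans hyz)]
      exact min1_tri (dist_triangle _ (y.left ((y.right : Equiv.Perm N) n)) _)
        dist_nonneg dist_nonneg
    · have h1 : wTerm y z n = 1 := if_neg hyz
      have := wTerm_le_one x z n
      have := wTerm_nonneg x y n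
      linarith
  · have h1 : wTerm x y n = 1 := if_neg hxy
    have := wTerm_le_one x z n
    have := wTerm_nonneg y z n
    linarith

section D

variable (dP : P → P → ℝ) (ι : N → ℕ)

noncomputable def wDist (dP : P → P → ℝ) (ι : N → ℕ) (x y : Wr N G P) : ℝ :=
  dP x.right y.right + ∑' n : N, (2⁻¹ : ℝ) ^ (ι n) * wTerm x y n

lemma summable_w (hι : Function.Injective ι) : Summable (fun n : N => (2⁻¹ : ℝ) ^ ι n) :=
  (summable_geometric_of_lt_one (by norm_num) (by norm_num)).comp_injective hι

lemma summable_wTerm (hι : Function.Injective ι) (x y : Wr N G P) :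
    Summable (fun n : N => (2⁻¹ : ℝ) ^ ι n * wTerm x y n) := by
  refine (summable_w ι hι).of_nonneg_of_le
    (fun n => mul_nonneg (by positivity) (wTerm_nonneg x y n)) (fun n => ?_)
  exact mul_le_of_le_one_right (by positivity) (wTerm_le_one x y n)

lemma wDist_self (h0 : ∀ p : P, dP p p = 0) (x : Wr N G P) : wDist dP ι x x = 0 := by
  simp [wDist, wTerm_self, h0]

lemma wDist_comm (hc : ∀ p q : P, dP p q = dP q p) (x y : Wr N G P) :
    wDist dP ι x y = wDist dP ι y x := by
  unfold wDist
  rw [hc]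
  congr 1
  exact tsum_congr fun n => by rw [wTerm_comm]

lemma wDist_triangle (hι : Function.Injective ι)
    (ht : ∀ p q r : P, dP p r ≤ dP p q + dP q r) (x y z : Wr N G P) :
    wDist dP ι x z ≤ wDist dP ι x y + wDist dP ι y z := by
  unfold wDist
  have h1 : ∑' n : N, (2⁻¹ : ℝ) ^ ι n * wTerm x z n ≤
      ∑' n : N, ((2⁻¹ : ℝ) ^ ι n * wTerm x y n + (2⁻¹ : ℝ) ^ ι n * wTerm y z n) := by
    refine Summable.tsum_le_tsum (fun n => ?_) (summable_wTerm ι hι x z)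
      ((summable_wTerm ι hι x y).add (summable_wTerm ι hι y z))
    rw [← mul_add]
    exact mul_le_mul_of_nonneg_left (wTerm_triangle x y z n) (by positivity)
  rw [Summable.tsum_add (summable_wTerm ι hι x y) (summable_wTerm ι hι y z)] at h1
  have := ht x.right y.right z.right
  linarith

lemma tsum_wTerm_nonneg (x y : Wr N G P) :
    0 ≤ ∑' n : N, (2⁻¹ : ℝ) ^ ι n * wTerm x y n :=
  tsum_nonneg fun n => mul_nonneg (by positivity) (wTerm_nonneg x y n)

lemma dP_le_wDist (x y : Wr N G P) : dP x.right y.right ≤ wDist dP ι x y :=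
  le_add_of_nonneg_right (tsum_wTerm_nonneg ι x y)

lemma term_le_wDist (hι : Function.Injective ι) (hn : ∀ p q : P, 0 ≤ dP p q)
    (x y : Wr N G P) (n : N) :
    (2⁻¹ : ℝ) ^ ι n * wTerm x y n ≤ wDist dP ι x y := by
  refine le_trans ?_ (le_add_of_nonneg_left (hn x.right y.right))
  exact Summable.le_tsum (summable_wTerm ι hι x y) n
    (fun m _ => mul_nonneg (by positivity) (wTerm_nonneg x y m))

lemma wDist_eq_zero (hι : Function.Injective ι)
    (he : ∀ p q : P, dP p q = 0 → p = q) (hn : ∀ p q : P, 0 ≤ dP p q)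
    (x y : Wr N G P) (h : wDist dP ι x y = 0) : x = y := by
  have hP0 : dP x.right y.right = 0 :=
    le_antisymm (by have := dP_le_wDist dP ι x y; linarith [tsum_wTerm_nonneg ι x y,
      (le_of_eq h : wDist dP ι x y ≤ 0)]) (hn _ _)
  have hR : x.right = y.right := he _ _ hP0
  have hterm : ∀ n : N, wTerm x y n = 0 := by
    intro n
    have h1 : (2⁻¹ : ℝ) ^ ι n * wTerm x y n ≤ 0 := by
      have := term_le_wDist dP ι hι hn x y n
      linarith [le_of_eq h]
    have h2 : (0:ℝ) < (2⁻¹ : ℝ) ^ ι n := by positivity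
    nlinarith [wTerm_nonneg x y n]
  have hL : x.left = y.left := by
    funext m
    have hn' := hterm ((x.right : Equiv.Perm N).symm m)
    unfold wTerm at hn'
    rw [if_pos (by rw [hR])] at hn'
    have hd : dist (x.left ((x.right : Equiv.Perm N) ((x.right : Equiv.Perm N).symm m)))
        (y.left ((y.right : Equiv.Perm N) ((x.right : Equiv.Perm N).symm m))) = 0 := by
      rcases min_eq_iff.mp hn' with h' | h'
      · norm_num at h'
      · exact h'.1
    rw [Equiv.apply_symm_apply, ← hR, Equiv.apply_symm_apply] at hd
    exact dist_eq_zero.mp hd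
  exact SemidirectProduct.ext hL hR


lemma wTerm_mul (hinv : ∀ g h h' : G, dist (g * h) (g * h') = dist h h')
    (z x y : Wr N G P) (n : N) : wTerm (z * x) (z * y) n = wTerm x y n := by
  have hr : ∀ w : Wr N G P, ((z * w).right : Equiv.Perm N)
      = (z.right : Equiv.Perm N) * (w.right : Equiv.Perm N) := by
    intro w; rw [SemidirectProduct.mul_right]; rfl
  have hl : ∀ w : Wr N G P, (z * w).left
      = fun m => z.left m * w.left ((z.right : Equiv.Perm N)⁻¹ m) := by
    intro w; rfl
  have hc : (((z * x).right : Equiv.Perm N) n = ((z * y).right : Equiv.Perm N) n)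
      ↔ ((x.right : Equiv.Perm N) n = (y.right : Equiv.Perm N) n) := by
    rw [hr, hr]
    simp [Equiv.Perm.mul_apply]
  unfold wTerm
  by_cases h : (x.right : Equiv.Perm N) n = (y.right : Equiv.Perm N) n
  · rw [if_pos (hc.mpr h), if_pos h]
    congr 1
    rw [hl, hl, hr, hr]
    simp only [Equiv.Perm.mul_apply, ← h, Equiv.Perm.inv_def, Equiv.symm_apply_apply]
    exact hinv _ _ _
  · rw [if_neg (fun hh => h (hc.mp hh)), if_neg h]

lemma wDist_mul (hinv : ∀ g h h' : G, dist (g * h) (g * h') = dist h h')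
    (hPinv : ∀ p q r : P, dP (p * q) (p * r) = dP q r)
    (z x y : Wr N G P) : wDist dP ι (z * x) (z * y) = wDist dP ι x y := by
  unfold wDist
  rw [SemidirectProduct.mul_right, SemidirectProduct.mul_right, hPinv]
  congr 1
  exact tsum_congr fun n => by rw [wTerm_mul hinv]

lemma wDist_le_tail (hι : Function.Injective ι) (x y : Wr N G P) (K : ℕ) (F : Finset N)
    (hF : ∀ n : N, n ∉ F → K ≤ ι n) :
    wDist dP ι x y ≤ dP x.right y.right + (∑ n ∈ F, (2⁻¹ : ℝ) ^ ι n * wTerm x y n)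
      + (2⁻¹ : ℝ) ^ K * 2 := by
  unfold wDist
  have hs := summable_wTerm (P := P) ι hι x y
  rw [← Summable.sum_add_tsum_compl (s := F) hs, ← add_assoc]
  have htail : ∑' (n : ↑((↑F : Set N)ᶜ)), (2⁻¹ : ℝ) ^ ι (n : N) * wTerm x y (n : N)
      ≤ (2⁻¹ : ℝ) ^ K * 2 := by
    have key : ∑' (n : ↑((↑F : Set N)ᶜ)), (2⁻¹ : ℝ) ^ ι (n : N) * wTerm x y (n : N)
        ≤ ∑' (j : ℕ), (2⁻¹ : ℝ) ^ (K + j) := by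
      have hKle : ∀ n : ↑((↑F : Set N)ᶜ), K ≤ ι (n : N) := fun n => hF n n.2
      refine Summable.tsum_le_tsum_of_inj (fun n => ι (n : N) - K)
        (fun a b hab => ?_) (fun c _ => by positivity) (fun n => ?_) ?_ ?_
      · have ha := hKle a; have hb := hKle b
        have hab' : ι (a : N) - K = ι (b : N) - K := hab
        have : ι (a : N) = ι (b : N) := by omega
        exact Subtype.ext (hι this)
      · have hKn := hKle n
        have : K + (ι (n : N) - K) = ι (n : N) := by omega
        rw [this]
        exact mul_le_of_le_one_right (by positivity) (wTerm_le_one x y (n : N))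
      · exact hs.subtype _
      · simpa [pow_add] using (summable_geometric_of_lt_one (r := (2⁻¹ : ℝ))
          (by norm_num) (by norm_num)).mul_left ((2⁻¹ : ℝ) ^ K)
    have hgeo : ∑' (j : ℕ), (2⁻¹ : ℝ) ^ (K + j) = (2⁻¹ : ℝ) ^ K * 2 := by
      simp only [pow_add]
      rw [tsum_mul_left, tsum_geometric_of_lt_one (by norm_num) (by norm_num)]
      norm_num
    linarith
  linarith

end D
end Aux

lemma metric_isOpen_iff {X : Type*} [t : TopologicalSpace X] (m : MetricSpace X)
    (h : m.toUniformSpace.toTopologicalSpace = t) (s : Set X) :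
    IsOpen s ↔ ∀ x ∈ s, ∃ ε > 0, ∀ y, m.dist x y < ε → y ∈ s := by
  subst h
  letI := m
  rw [Metric.isOpen_iff]
  constructor
  · intro H x hx
    obtain ⟨ε, hε, hb⟩ := H x hx
    exact ⟨ε, hε, fun y hy => hb (by simpa [Metric.mem_ball, dist_comm] using hy)⟩
  · intro H x hx
    obtain ⟨ε, hε, hb⟩ := H x hx
    exact ⟨ε, hε, fun y hy => hb y (by simpa [Metric.mem_ball, dist_comm] using hy)⟩

lemma metric_ball_isOpen {X : Type*} [t : TopologicalSpace X] (m : MetricSpace X)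
    (h : m.toUniformSpace.toTopologicalSpace = t) (x : X) (c : ℝ) :
    IsOpen {y | m.dist x y < c} := by
  rw [metric_isOpen_iff m h]
  intro y hy
  refine ⟨c - m.dist x y, by simpa using hy, fun z hz => ?_⟩
  have h3 : m.dist x z ≤ m.dist x y + m.dist y z := by
    letI := m; exact dist_triangle x y z
  simp only [Set.mem_setOf_eq] at hy ⊢
  linarith

set_option maxHeartbeats 1000000 in
theorem stmt16 {N : Type*} [Countable N] {G : Type*} [Group G] [TopologicalSpace G]
    [IsTopologicalGroup G] [PolishSpace G] (hG : IsCLI G)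
    (P : Subgroup (Equiv.Perm N))
    (hPcl : @IsClosed _ (PermTop N) (P : Set (Equiv.Perm N)))
    (hP : @IsCLI P _ (@instTopologicalSpaceSubtype (Equiv.Perm N) (· ∈ P) (PermTop N))) :
    @IsCLI (SemidirectProduct (N → G) P ((permShift N G).comp P.subtype)) _
      (TopologicalSpace.induced
        (fun x : SemidirectProduct (N → G) P ((permShift N G).comp P.subtype) =>
          (x.left, x.right))
        (@instTopologicalSpaceProd (N → G) P Pi.topologicalSpace
          (@instTopologicalSpaceSubtype (Equiv.Perm N) (· ∈ P) (PermTop N)))) := by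
  classical
  obtain ⟨mG, hGtop, hGinv, hGcomp⟩ := hG
  obtain ⟨mP, hPtop, hPinv, hPcomp⟩ := hP
  obtain ⟨ι, hι⟩ := Countable.exists_injective_nat N
  set W := SemidirectProduct (N → G) P ((permShift N G).comp P.subtype) with hW
  letI tP : TopologicalSpace P :=
    @instTopologicalSpaceSubtype (Equiv.Perm N) (· ∈ P) (PermTop N)
  letI tW : TopologicalSpace W :=
    TopologicalSpace.induced (fun x : W => (x.left, x.right))
      (@instTopologicalSpaceProd (N → G) P Pi.topologicalSpace tP)
  letI : MetricSpace G := mG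
  set dP : P → P → ℝ := fun p q => mP.dist p q with hdP
  -- basic properties of dP
  have dP_self : ∀ p : P, dP p p = 0 := fun p => by letI := mP; exact dist_self p
  have dP_comm : ∀ p q : P, dP p q = dP q p := fun p q => by letI := mP; exact dist_comm p q
  have dP_tri : ∀ p q r : P, dP p r ≤ dP p q + dP q r := fun p q r => by
    letI := mP; exact dist_triangle p q r
  have dP_nonneg : ∀ p q : P, 0 ≤ dP p q := fun p q => by letI := mP; exact dist_nonneg
  have dP_eq : ∀ p q : P, dP p q = 0 → p = q := fun p q h => by
    letI := mP; exact dist_eq_zero.mp h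
  set D : W → W → ℝ := wDist dP ι with hD
  -- continuity of evaluation on P
  have hevalP : ∀ n : N, @Continuous P N tP ⊥ (fun q : P => (q : Equiv.Perm N) n) := by
    intro n
    have h1 : @Continuous P (Equiv.Perm N) tP (PermTop N) Subtype.val :=
      continuous_induced_dom
    have h2 : @Continuous (Equiv.Perm N) (N → N) (PermTop N)
        (@Pi.topologicalSpace N (fun _ => N) (fun _ => ⊥)) (fun σ => (σ : N → N)) :=
      continuous_induced_dom
    have h3 : @Continuous (N → N) N (@Pi.topologicalSpace N (fun _ => N) (fun _ => ⊥)) ⊥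
        (fun f => f n) := @continuous_apply N (fun _ => N) (fun _ => ⊥) n
    have h21 : @Continuous P (N → N) tP (@Pi.topologicalSpace N (fun _ => N) (fun _ => ⊥))
        (fun q : P => ((q : Equiv.Perm N) : N → N)) :=
      @Continuous.comp P (Equiv.Perm N) (N → N) tP (PermTop N)
        (@Pi.topologicalSpace N (fun _ => N) (fun _ => ⊥)) _ _ h2 h1
    exact @Continuous.comp P (N → N) N tP
      (@Pi.topologicalSpace N (fun _ => N) (fun _ => ⊥)) ⊥ _ _ h3 h21
  -- the openness criterion
  have Hopen : ∀ s : Set W, IsOpen s ↔ ∀ x ∈ s, ∃ ε > 0, ∀ y, D x y < ε → y ∈ s := by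
    intro s
    constructor
    · intro hs x hx
      obtain ⟨u, hu, rfl⟩ := isOpen_induced_iff.mp hs
      have hxu : (x.left, x.right) ∈ u := hx
      obtain ⟨U, V, hU, hV, hxU, hxV, hUV⟩ := isOpen_prod_iff.mp hu x.left x.right hxu
      obtain ⟨I, u', hu', hIU⟩ := isOpen_pi_iff.mp hU x.left hxU
      have hδex : ∀ m : N, ∃ δ : ℝ, 0 < δ ∧
          (m ∈ I → ∀ g : G, mG.dist (x.left m) g < δ → g ∈ u' m) := by
        intro m
        by_cases hm : m ∈ I
        · obtain ⟨δ, hδ0, hδb⟩ := (metric_isOpen_iff mG hGtop (u' m)).mp (hu' m hm).1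
            (x.left m) (hu' m hm).2
          exact ⟨δ, hδ0, fun _ => hδb⟩
        · exact ⟨1, one_pos, fun hm' => absurd hm' hm⟩
      choose δ hδ0 hδball using hδex
      obtain ⟨δP, hδP0, hδPball⟩ := (metric_isOpen_iff mP hPtop V).mp hV x.right hxV
      set ε : ℝ := min δP (min 1 (∏ m ∈ I,
        (2⁻¹ : ℝ) ^ ι ((x.right : Equiv.Perm N).symm m) * min 1 (δ m))) with hε
      refine ⟨ε, ?_, ?_⟩
      · exact lt_min hδP0 (lt_min one_pos (Finset.prod_pos fun m _ =>
          mul_pos (by positivity) (lt_min one_pos (hδ0 m))))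
      · intro y hy
        have h1 : dP x.right y.right ≤ D x y := dP_le_wDist dP ι x y
        have hyV : y.right ∈ V := hδPball y.right
          (lt_of_le_of_lt h1 (lt_of_lt_of_le hy (min_le_left _ _)))
        have hyU : y.left ∈ U := by
          apply hIU
          rw [Set.mem_pi]
          intro m hm
          set n := (x.right : Equiv.Perm N).symm m with hn
          have hxm : (x.right : Equiv.Perm N) n = m := Equiv.apply_symm_apply _ m
          have hfac : (∏ m' ∈ I, (2⁻¹ : ℝ) ^ ι ((x.right : Equiv.Perm N).symm m')
              * min 1 (δ m')) ≤ (2⁻¹ : ℝ) ^ ι n * min 1 (δ m) := by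
            rw [← Finset.mul_prod_erase I _ hm]
            refine mul_le_of_le_one_right
              (mul_nonneg (by positivity) (le_min zero_le_one (hδ0 m).le)) ?_
            refine Finset.prod_le_one (fun m' _ =>
              mul_nonneg (by positivity) (le_min zero_le_one (hδ0 m').le)) (fun m' _ => ?_)
            refine mul_le_one₀ (pow_le_one₀ (by norm_num) (by norm_num)) 
              (le_min zero_le_one (hδ0 m').le) (min_le_left _ _)
          have hterm : (2⁻¹ : ℝ) ^ ι n * wTerm x y n ≤ D x y :=
            term_le_wDist dP ι hι dP_nonneg x y n
          have hεle : ε ≤ (2⁻¹ : ℝ) ^ ι n * min 1 (δ m) :=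
            le_trans (min_le_right _ _) (le_trans (min_le_right _ _) hfac)
          have hT : wTerm x y n < min 1 (δ m) := by
            have h2 : (2⁻¹ : ℝ) ^ ι n * wTerm x y n < (2⁻¹ : ℝ) ^ ι n * min 1 (δ m) :=
              lt_of_le_of_lt hterm (lt_of_lt_of_le hy hεle)
            have h3 : (0:ℝ) < (2⁻¹ : ℝ) ^ ι n := by positivity
            exact lt_of_mul_lt_mul_left h2 h3.le
          have hcond : (x.right : Equiv.Perm N) n = (y.right : Equiv.Perm N) n := by
            by_contra hc
            have h4 : wTerm x y n = 1 := if_neg hc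
            rw [h4] at hT
            have := min_le_left 1 (δ m)
            linarith
          have hTval : wTerm x y n = min 1 (dist (x.left ((x.right : Equiv.Perm N) n))
              (y.left ((y.right : Equiv.Perm N) n))) := if_pos hcond
          have hdlt : mG.dist (x.left m) (y.left m) < δ m := by
            rw [hTval, hxm, ← hcond, hxm] at hT
            by_contra hge
            push_neg at hge
            have : min 1 (δ m) ≤ min 1 (dist (x.left m) (y.left m)) :=
              min_le_min le_rfl hge
            linarith
          exact hδball m hm (y.left m) hdlt
        exact hUV (Set.mk_mem_prod hyU hyV)
    · intro hcrit
      have key : ∀ x, x ∈ s → ∃ u : Set ((N → G) × P), IsOpen u ∧ (x.left, x.right) ∈ u ∧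
          (fun y : W => (y.left, y.right)) ⁻¹' u ⊆ s := by
        intro x hx
        obtain ⟨ε, hε0, hball⟩ := hcrit x hx
        obtain ⟨K, hK⟩ : ∃ K : ℕ, (2⁻¹ : ℝ) ^ K * 2 < ε / 3 := by
          obtain ⟨K, hK⟩ := exists_pow_lt_of_lt_one
            (show (0:ℝ) < ε / 6 by positivity) (show (2⁻¹ : ℝ) < 1 by norm_num)
          exact ⟨K, by linarith⟩
        have hFfin : {n : N | ι n < K}.Finite :=
          Set.Finite.preimage (Function.Injective.injOn hι) (Set.finite_Iio K)
        set F := hFfin.toFinset with hFdef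
        have hF : ∀ n : N, n ∉ F → K ≤ ι n := fun n hn =>
          not_lt.mp (by simpa [hFdef, Set.Finite.mem_toFinset] using hn)
        set δ' : ℝ := ε / (3 * (F.card + 1)) with hδ'def
        have hδ'0 : 0 < δ' := by positivity
        set U : Set (N → G) := {g | ∀ n ∈ F,
          mG.dist (x.left ((x.right : Equiv.Perm N) n)) (g ((x.right : Equiv.Perm N) n)) < δ'}
          with hUdef
        set V : Set P := {q | mP.dist x.right q < ε / 3} ∩
          (⋂ n ∈ F, {q : P | (q : Equiv.Perm N) n = (x.right : Equiv.Perm N) n}) with hVdef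
        refine ⟨U ×ˢ V, IsOpen.prod ?_ ?_, ⟨?_, ?_⟩, ?_⟩
        · have hUeq : U = ⋂ n ∈ F, (fun g : N → G => g ((x.right : Equiv.Perm N) n)) ⁻¹'
              {h : G | mG.dist (x.left ((x.right : Equiv.Perm N) n)) h < δ'} := by
            ext g
            simp [hUdef]
          rw [hUeq]
          refine isOpen_biInter_finset fun n _ => ?_
          exact (metric_ball_isOpen mG hGtop _ _).preimage
            (continuous_apply ((x.right : Equiv.Perm N) n))
        · refine IsOpen.inter (metric_ball_isOpen mP hPtop x.right (ε / 3)) ?_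
          refine isOpen_biInter_finset fun n _ => ?_
          have heq : {q : P | (q : Equiv.Perm N) n = (x.right : Equiv.Perm N) n} =
              (fun q : P => (q : Equiv.Perm N) n) ⁻¹' {(x.right : Equiv.Perm N) n} := by
            ext q; simp
          rw [heq]
          have hbot : ∀ t : Set N, @IsOpen N ⊥ t := fun t =>
            @isOpen_discrete N ⊥ (discreteTopology_bot N) t
          exact (@continuous_def P N tP ⊥ _).mp (hevalP n) _ (hbot _)
        · intro n _
          show mG.dist (x.left ((x.right : Equiv.Perm N) n))
              (x.left ((x.right : Equiv.Perm N) n)) < δ'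
          exact lt_of_le_of_lt (le_of_eq (dist_self _)) hδ'0
        · refine ⟨?_, Set.mem_iInter₂.mpr fun n _ => rfl⟩
          show mP.dist x.right x.right < ε / 3
          exact lt_of_le_of_lt (le_of_eq (dP_self x.right)) (by positivity)
        · rintro y ⟨hyU, hyV⟩
          apply hball
          have htail := wDist_le_tail dP ι hι x y K F hF
          have hsum : ∑ n ∈ F, (2⁻¹ : ℝ) ^ ι n * wTerm x y n ≤ F.card * δ' := by
            have hterm : ∀ n ∈ F, (2⁻¹ : ℝ) ^ ι n * wTerm x y n ≤ δ' := by
              intro n hn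
              have hcond : (x.right : Equiv.Perm N) n = (y.right : Equiv.Perm N) n := by
                have := Set.mem_iInter₂.mp hyV.2 n hn
                exact this.symm
              have hTval : wTerm x y n = min 1 (dist (x.left ((x.right : Equiv.Perm N) n))
                  (y.left ((y.right : Equiv.Perm N) n))) := if_pos hcond
              have hdy := hyU n hn
              have hT : wTerm x y n ≤ δ' := by
                rw [hTval, ← hcond]
                exact le_trans (min_le_right _ _) (le_of_lt hdy)
              calc (2⁻¹ : ℝ) ^ ι n * wTerm x y n ≤ 1 * wTerm x y n := by
                    refine mul_le_mul_of_nonneg_right (pow_le_one₀ (by norm_num) (by norm_num))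
                      (wTerm_nonneg x y n)
                _ = wTerm x y n := one_mul _
                _ ≤ δ' := hT
            calc ∑ n ∈ F, (2⁻¹ : ℝ) ^ ι n * wTerm x y n ≤ ∑ _n ∈ F, δ' :=
                  Finset.sum_le_sum hterm
              _ = F.card * δ' := by rw [Finset.sum_const, nsmul_eq_mul]
          have hcard : (F.card : ℝ) * δ' < ε / 3 := by
            have h5 : (F.card : ℝ) < F.card + 1 := by linarith
            have : (F.card : ℝ) * δ' < (F.card + 1) * δ' := by
              exact mul_lt_mul_of_pos_right h5 hδ'0
            have h6 : ((F.card : ℝ) + 1) * δ' = ε / 3 := by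
              rw [hδ'def]; field_simp
            linarith
          have hdPy : dP x.right y.right < ε / 3 := hyV.1
          show D x y < ε
          rw [hD]
          calc wDist dP ι x y ≤ dP x.right y.right
              + (∑ n ∈ F, (2⁻¹ : ℝ) ^ ι n * wTerm x y n) + (2⁻¹ : ℝ) ^ K * 2 := htail
            _ < ε / 3 + ε / 3 + ε / 3 := by
                have := lt_of_le_of_lt hsum hcard
                exact add_lt_add (add_lt_add hdPy this) hK
            _ = ε := by ring
      choose uu huopen humem husub using key
      have hs_eq : s = (fun y : W => (y.left, y.right)) ⁻¹'
          (⋃ x, ⋃ hx : x ∈ s, uu x hx) := by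
        ext y
        simp only [Set.mem_preimage, Set.mem_iUnion]
        constructor
        · intro hy; exact ⟨y, hy, humem y hy⟩
        · rintro ⟨x, hx, hyu⟩; exact husub x hx hyu
      rw [hs_eq]
      exact isOpen_induced_iff.mpr
        ⟨_, isOpen_iUnion fun x => isOpen_iUnion fun hx => huopen x hx, rfl⟩
  letI M : MetricSpace W :=
    MetricSpace.ofDistTopology D (wDist_self dP ι dP_self) (wDist_comm dP ι dP_comm)
      (wDist_triangle dP ι hι dP_tri) Hopen (wDist_eq_zero dP ι hι dP_eq dP_nonneg)
  refine ⟨M, rfl, ?_, ?_⟩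
  · intro z x y
    exact wDist_mul dP ι hGinv (fun p q r => hPinv p q r) z x y
  · -- completeness
    apply Metric.complete_of_cauchySeq_tendsto
    intro u hu
    have hcau : ∀ ε > (0:ℝ), ∃ K, ∀ k ≥ K, ∀ l ≥ K, D (u k) (u l) < ε := by
      intro ε hε
      exact Metric.cauchySeq_iff.mp hu ε hε
    -- the permutation parts converge
    obtain ⟨q, hq0⟩ : ∃ q : P, Filter.Tendsto (fun k => (u k).right) Filter.atTop
        (@nhds P mP.toUniformSpace.toTopologicalSpace q) := by
      letI := mP
      haveI : CompleteSpace P := hPcomp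
      have hpcau : CauchySeq (fun k => (u k).right) := by
        refine Metric.cauchySeq_iff.mpr ?_
        intro ε hε
        obtain ⟨K, hK⟩ := hcau ε hε
        exact ⟨K, fun k hk l hl =>
          lt_of_le_of_lt (dP_le_wDist dP ι (u k) (u l)) (hK k hk l hl)⟩
      exact cauchySeq_tendsto_of_complete hpcau
    have hq : Filter.Tendsto (fun k => (u k).right) Filter.atTop (@nhds P tP q) := by
      show Filter.Tendsto (fun k => (u k).right) Filter.atTop
        (@nhds P (@instTopologicalSpaceSubtype (Equiv.Perm N) (· ∈ P) (PermTop N)) q)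
      rw [← hPtop]; exact hq0
    -- eventual stabilization of each coordinate of the permutations
    have hqev : ∀ n : N, ∀ᶠ k in Filter.atTop,
        ((u k).right : Equiv.Perm N) n = (q : Equiv.Perm N) n := by
      intro n
      letI tN : TopologicalSpace N := (⊥ : TopologicalSpace N)
      haveI : DiscreteTopology N := discreteTopology_bot N
      have h2 : Filter.Tendsto (fun k => ((u k).right : Equiv.Perm N) n) Filter.atTop
          (nhds ((q : Equiv.Perm N) n)) :=
        (@Continuous.tendsto P N tP ⊥ _ (hevalP n) q).comp hq
      have h3 : {m : N | m = (q : Equiv.Perm N) n} ∈ nhds ((q : Equiv.Perm N) n) :=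
        IsOpen.mem_nhds (isOpen_discrete _) rfl
      exact h2 h3
    -- each coordinate of the left parts is Cauchy
    have hGcau : ∀ m : N, @CauchySeq G ℕ mG.toUniformSpace _ (fun k => (u k).left m) := by
      intro m
      refine Metric.cauchySeq_iff.mpr ?_
      intro ε hε
      set n := (q : Equiv.Perm N).symm m with hn
      have hqm : (q : Equiv.Perm N) n = m := Equiv.apply_symm_apply _ m
      obtain ⟨K₁, hK₁⟩ := Filter.eventually_atTop.mp (hqev n)
      obtain ⟨K₂, hK₂⟩ := hcau ((2⁻¹ : ℝ) ^ ι n * min 1 ε) (by positivity)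
      refine ⟨max K₁ K₂, fun k hk l hl => ?_⟩
      have hk1 := hK₁ k (le_trans (le_max_left _ _) hk)
      have hl1 := hK₁ l (le_trans (le_max_left _ _) hl)
      have hDkl := hK₂ k (le_trans (le_max_right _ _) hk) l (le_trans (le_max_right _ _) hl)
      have hterm : (2⁻¹ : ℝ) ^ ι n * wTerm (u k) (u l) n ≤ D (u k) (u l) :=
        term_le_wDist dP ι hι dP_nonneg _ _ n
      have hT : wTerm (u k) (u l) n < min 1 ε := by
        have h2 := lt_of_le_of_lt hterm hDkl
        exact lt_of_mul_lt_mul_left h2 (by positivity)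
      have hcond : ((u k).right : Equiv.Perm N) n = ((u l).right : Equiv.Perm N) n := by
        by_contra hc
        have h4 : wTerm (u k) (u l) n = 1 := if_neg hc
        rw [h4] at hT
        have := min_le_left 1 ε
        linarith
      have hTval : wTerm (u k) (u l) n = min 1 (dist ((u k).left (((u k).right : Equiv.Perm N) n))
          ((u l).left (((u l).right : Equiv.Perm N) n))) := if_pos hcond
      rw [hTval, hk1, hl1, hqm] at hT
      by_contra hge
      push_neg at hge
      have : min 1 ε ≤ min 1 (dist ((u k).left m) ((u l).left m)) := min_le_min le_rfl hge
      linarith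
    have hGlim : ∀ m : N, ∃ b : G, Filter.Tendsto (fun k => (u k).left m) Filter.atTop
        (@nhds G mG.toUniformSpace.toTopologicalSpace b) := by
      intro m
      haveI : @CompleteSpace G mG.toUniformSpace := hGcomp
      exact @cauchySeq_tendsto_of_complete G ℕ mG.toUniformSpace _ _ _ (hGcau m)
    choose a ha using hGlim
    have ha' : ∀ m : N, ∀ ε > (0:ℝ), ∀ᶠ k in Filter.atTop, mG.dist ((u k).left m) (a m) < ε := by
      intro m ε hε
      obtain ⟨K, hK⟩ := Metric.tendsto_atTop.mp (ha m) ε hε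
      exact Filter.eventually_atTop.mpr ⟨K, hK⟩
    have hqdist : ∀ ε > (0:ℝ), ∀ᶠ k in Filter.atTop, mP.dist (u k).right q < ε := by
      intro ε hε
      letI := mP
      obtain ⟨K, hK⟩ := Metric.tendsto_atTop.mp hq0 ε hε
      exact Filter.eventually_atTop.mpr ⟨K, hK⟩
    refine ⟨⟨a, q⟩, Metric.tendsto_atTop.mpr ?_⟩
    intro ε hε
    obtain ⟨K, hK⟩ : ∃ K : ℕ, (2⁻¹ : ℝ) ^ K * 2 < ε / 3 := by
      obtain ⟨K, hK⟩ := exists_pow_lt_of_lt_one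
        (show (0:ℝ) < ε / 6 by positivity) (show (2⁻¹ : ℝ) < 1 by norm_num)
      exact ⟨K, by linarith⟩
    have hFfin : {n : N | ι n < K}.Finite :=
      Set.Finite.preimage (Function.Injective.injOn hι) (Set.finite_Iio K)
    set F := hFfin.toFinset with hFdef
    have hF : ∀ n : N, n ∉ F → K ≤ ι n := fun n hn =>
      not_lt.mp (by simpa [hFdef, Set.Finite.mem_toFinset] using hn)
    set δ' : ℝ := ε / (3 * (F.card + 1)) with hδ'def
    have hδ'0 : 0 < δ' := by positivity
    have hev : ∀ᶠ k in Filter.atTop, (mP.dist (u k).right q < ε / 3 ∧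
        ∀ n ∈ F, ((u k).right : Equiv.Perm N) n = (q : Equiv.Perm N) n ∧
          mG.dist ((u k).left ((q : Equiv.Perm N) n)) (a ((q : Equiv.Perm N) n)) < δ') := by
      refine (hqdist (ε/3) (by positivity)).and ?_
      refine (Filter.eventually_all_finset F).mpr fun n hn => ?_
      exact (hqev n).and (ha' ((q : Equiv.Perm N) n) δ' hδ'0)
    obtain ⟨K₀, hK₀⟩ := Filter.eventually_atTop.mp hev
    refine ⟨K₀, fun k hk => ?_⟩
    obtain ⟨hc1, hc2⟩ := hK₀ k hk
    show D (u k) ⟨a, q⟩ < ε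
    have htail := wDist_le_tail dP ι hι (u k) ⟨a, q⟩ K F hF
    have hsum : ∑ n ∈ F, (2⁻¹ : ℝ) ^ ι n * wTerm (u k) ⟨a, q⟩ n ≤ F.card * δ' := by
      have hterm : ∀ n ∈ F, (2⁻¹ : ℝ) ^ ι n * wTerm (u k) ⟨a, q⟩ n ≤ δ' := by
        intro n hn
        obtain ⟨hcond, hdist⟩ := hc2 n hn
        have hTval : wTerm (u k) ⟨a, q⟩ n = min 1 (dist ((u k).left
            (((u k).right : Equiv.Perm N) n)) (a ((q : Equiv.Perm N) n))) := if_pos hcond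
        have hT : wTerm (u k) ⟨a, q⟩ n ≤ δ' := by
          rw [hTval, hcond]
          exact le_trans (min_le_right _ _) (le_of_lt hdist)
        calc (2⁻¹ : ℝ) ^ ι n * wTerm (u k) ⟨a, q⟩ n ≤ 1 * wTerm (u k) ⟨a, q⟩ n :=
              mul_le_mul_of_nonneg_right (pow_le_one₀ (by norm_num) (by norm_num))
                (wTerm_nonneg _ _ n)
          _ = wTerm (u k) ⟨a, q⟩ n := one_mul _
          _ ≤ δ' := hT
      calc ∑ n ∈ F, (2⁻¹ : ℝ) ^ ι n * wTerm (u k) ⟨a, q⟩ n ≤ ∑ _n ∈ F, δ' :=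
            Finset.sum_le_sum hterm
        _ = F.card * δ' := by rw [Finset.sum_const, nsmul_eq_mul]
    have hcard : (F.card : ℝ) * δ' < ε / 3 := by
      have h5 : (F.card : ℝ) < F.card + 1 := by linarith
      have h6 : (F.card : ℝ) * δ' < (F.card + 1) * δ' := mul_lt_mul_of_pos_right h5 hδ'0
      have h7 : ((F.card : ℝ) + 1) * δ' = ε / 3 := by
        rw [hδ'def]; field_simp
      linarith
    calc D (u k) ⟨a, q⟩ ≤ dP (u k).right q
        + (∑ n ∈ F, (2⁻¹ : ℝ) ^ ι n * wTerm (u k) ⟨a, q⟩ n) + (2⁻¹ : ℝ) ^ K * 2 := htail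
      _ < ε / 3 + ε / 3 + ε / 3 :=
          add_lt_add (add_lt_add hc1 (lt_of_le_of_lt hsum hcard)) hK
      _ = ε := by ring
end
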